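/- There exist constants 0 < c₁ ≤ c₂ such that for all t > 0 and x > y, c₁ (x-y)t/(√t + x - y) ≤ σ_{t}⁴ - μ_{t,x,y}² ≤ c₂ (x-y)t/(√t + x - y), where σ_t² = √(t/π) and μ_{t,x,y} = (1/(2√π)) ∫₀^t r^{-1/2} exp(-(x-y)²/(4r)) dr. -/

import Mathlib

open MeasureTheory Real

/-- `μ_{t,x,y} = E[u(t,x)u(t,y)] = (1/(2√π)) ∫₀^t r^{-1/2} exp(-(x-y)²/(4r)) dr`. -/
noncomputable def muCov (t x y : ℝ) : ℝ :=
  (2 * Real.sqrt π)⁻¹ *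
    ∫ r in Set.Ioc (0 : ℝ) t, (Real.sqrt r)⁻¹ * Real.exp (-(x - y) ^ 2 / (4 * r))


lemma inv_sqrt_eq_rpow {r : ℝ} (hr : 0 ≤ r) : (Real.sqrt r)⁻¹ = r ^ (-(1/2) : ℝ) := by
  rw [Real.rpow_neg hr, Real.sqrt_eq_rpow]

lemma int_inv_sqrt (a : ℝ) (ha : 0 ≤ a) :
    ∫ r in Set.Ioc (0:ℝ) a, (Real.sqrt r)⁻¹ = 2 * Real.sqrt a := by
  rw [← intervalIntegral.integral_of_le ha,
    intervalIntegral.integral_congr (g := fun r : ℝ => r ^ (-(1/2) : ℝ))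
      (fun r hr => inv_sqrt_eq_rpow (by
        rcases (Set.uIcc_of_le ha ▸ hr : r ∈ Set.Icc 0 a) with ⟨h0, _⟩; exact h0)),
    integral_rpow (Or.inl (by norm_num))]
  rw [show (-(1/2) + 1 : ℝ) = 1/2 by norm_num, ← Real.sqrt_eq_rpow,
    Real.zero_rpow (by norm_num), Real.sqrt_eq_rpow]
  ring


lemma intOn_inv_sqrt {a : ℝ} (ha : 0 ≤ a) :
    IntegrableOn (fun r : ℝ => (Real.sqrt r)⁻¹) (Set.Ioc 0 a) := by
  have h := (intervalIntegrable_iff_integrableOn_Ioc_of_le ha).1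
    (intervalIntegral.intervalIntegrable_rpow' (r := -(1/2)) (by norm_num))
  exact h.congr_fun (fun r hr => (inv_sqrt_eq_rpow hr.1.le).symm) measurableSet_Ioc

lemma intOn_f1 {a z : ℝ} (ha : 0 ≤ a) :
    IntegrableOn (fun r : ℝ => (Real.sqrt r)⁻¹ * Real.exp (-z ^ 2 / (4 * r)))
      (Set.Ioc 0 a) := by
  apply Integrable.mono' (intOn_inv_sqrt ha)
  · apply Measurable.aestronglyMeasurable
    fun_prop
  · refine (ae_restrict_iff' measurableSet_Ioc).2 (Filter.Eventually.of_forall fun r hr => ?_)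
    have h1 : Real.exp (-z ^ 2 / (4 * r)) ≤ 1 := by
      apply Real.exp_le_one_iff.mpr
      apply div_nonpos_of_nonpos_of_nonneg (neg_nonpos.mpr (sq_nonneg z)) (by linarith [hr.1])
    have h0 : (0:ℝ) ≤ (Real.sqrt r)⁻¹ := by positivity
    rw [Real.norm_eq_abs, abs_of_nonneg (by positivity)]
    nlinarith [Real.exp_pos (-z ^ 2 / (4 * r))]

lemma intOn_f2 {a z : ℝ} (ha : 0 ≤ a) :
    IntegrableOn (fun r : ℝ => (Real.sqrt r)⁻¹ * (1 - Real.exp (-z ^ 2 / (4 * r))))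
      (Set.Ioc 0 a) := by
  simpa [mul_sub, mul_one, Pi.sub_def] using (intOn_inv_sqrt ha).sub (intOn_f1 (z := z) ha)

lemma f2_nonneg {z r : ℝ} (hr : 0 < r) :
    0 ≤ (Real.sqrt r)⁻¹ * (1 - Real.exp (-z ^ 2 / (4 * r))) := by
  have h1 : Real.exp (-z ^ 2 / (4 * r)) ≤ 1 :=
    Real.exp_le_one_iff.mpr
      (div_nonpos_of_nonpos_of_nonneg (neg_nonpos.mpr (sq_nonneg z)) (by linarith))
  have h0 : (0:ℝ) ≤ (Real.sqrt r)⁻¹ := by positivity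
  nlinarith

lemma A_lower {t z : ℝ} (ht : 0 < t) (hz : 0 < z) :
    (1 - Real.exp (-(1/4))) * (2 * (z * Real.sqrt t / (Real.sqrt t + z))) ≤
      ∫ r in Set.Ioc (0:ℝ) t, (Real.sqrt r)⁻¹ * (1 - Real.exp (-z ^ 2 / (4 * r))) := by
  have hst : 0 < Real.sqrt t := Real.sqrt_pos.mpr ht
  set m : ℝ := min t (z ^ 2) with hm
  have hm0 : 0 < m := lt_min ht (by positivity)
  have hmt : m ≤ t := min_le_left _ _
  have hmz : m ≤ z ^ 2 := min_le_right _ _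
  have hsub : Set.Ioc 0 m ⊆ Set.Ioc 0 t := Set.Ioc_subset_Ioc_right hmt
  have hce : Real.exp (-(1/4)) < 1 := Real.exp_lt_one_iff.mpr (by norm_num)
  -- step 1
  have step1 : (∫ r in Set.Ioc (0:ℝ) m, (Real.sqrt r)⁻¹ * (1 - Real.exp (-z ^ 2 / (4 * r))))
      ≤ ∫ r in Set.Ioc (0:ℝ) t, (Real.sqrt r)⁻¹ * (1 - Real.exp (-z ^ 2 / (4 * r))) := by
    refine setIntegral_mono_set (intOn_f2 ht.le) ?_ (HasSubset.Subset.eventuallyLE hsub)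
    exact (ae_restrict_iff' measurableSet_Ioc).2
      (Filter.Eventually.of_forall fun r hr => f2_nonneg hr.1)
  -- step 2
  have step2 : (1 - Real.exp (-(1/4))) * ∫ r in Set.Ioc (0:ℝ) m, (Real.sqrt r)⁻¹
      ≤ ∫ r in Set.Ioc (0:ℝ) m, (Real.sqrt r)⁻¹ * (1 - Real.exp (-z ^ 2 / (4 * r))) := by
    rw [← MeasureTheory.integral_const_mul]
    refine setIntegral_mono_on ((intOn_inv_sqrt hm0.le).const_mul _)
      (intOn_f2 hm0.le) measurableSet_Ioc fun r hr => ?_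
    have hrr : 0 < r := hr.1
    have hee : Real.exp (-z ^ 2 / (4 * r)) ≤ Real.exp (-(1/4)) := by
      apply Real.exp_le_exp.mpr
      rw [div_le_iff₀ (by positivity : (0:ℝ) < 4 * r)]
      nlinarith [hr.2]
    have h0 : (0:ℝ) ≤ (Real.sqrt r)⁻¹ := by positivity
    nlinarith
  have step3 : (∫ r in Set.Ioc (0:ℝ) m, (Real.sqrt r)⁻¹) = 2 * Real.sqrt m :=
    int_inv_sqrt m hm0.le
  have step4 : z * Real.sqrt t / (Real.sqrt t + z) ≤ Real.sqrt m := by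
    rcases min_cases t (z ^ 2) with ⟨h, _⟩ | ⟨h, _⟩
    · rw [hm, h, div_le_iff₀ (by positivity)]
      nlinarith [mul_self_nonneg (Real.sqrt t)]
    · rw [hm, h, Real.sqrt_sq hz.le, div_le_iff₀ (by positivity)]
      nlinarith
  calc (1 - Real.exp (-(1/4))) * (2 * (z * Real.sqrt t / (Real.sqrt t + z)))
      ≤ (1 - Real.exp (-(1/4))) * (2 * Real.sqrt m) := by nlinarith
    _ = (1 - Real.exp (-(1/4))) * ∫ r in Set.Ioc (0:ℝ) m, (Real.sqrt r)⁻¹ := by rw [step3]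
    _ ≤ _ := step2.trans step1

lemma int_rpow32 {a b : ℝ} (ha : 0 < a) (hab : a ≤ b) :
    ∫ r in Set.Ioc a b, (Real.sqrt r)⁻¹ * r⁻¹
      = 2 * ((Real.sqrt a)⁻¹ - (Real.sqrt b)⁻¹) := by
  rw [← intervalIntegral.integral_of_le hab,
    intervalIntegral.integral_congr (g := fun r : ℝ => r ^ (-(3/2) : ℝ))
      (fun r hr => by
        rcases (Set.uIcc_of_le hab ▸ hr : r ∈ Set.Icc a b) with ⟨h1, _⟩
        have hr0 : 0 < r := lt_of_lt_of_le ha h1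
        show (Real.sqrt r)⁻¹ * r⁻¹ = r ^ (-(3/2) : ℝ)
        rw [show (-(3/2) : ℝ) = -(1/2) + (-1) by norm_num, Real.rpow_add hr0,
          Real.rpow_neg_one, ← inv_sqrt_eq_rpow hr0.le]),
    integral_rpow (Or.inr ⟨by norm_num, by
      rw [Set.uIcc_of_le hab]; intro h0; exact absurd h0.1 (by linarith)⟩)]
  rw [show (-(3/2) + 1 : ℝ) = -(1/2) by norm_num, ← inv_sqrt_eq_rpow ha.le,
    ← inv_sqrt_eq_rpow (le_trans ha.le hab)]
  ring

lemma f2_le_f0 {z r : ℝ} (hr : 0 < r) :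
    (Real.sqrt r)⁻¹ * (1 - Real.exp (-z ^ 2 / (4 * r))) ≤ (Real.sqrt r)⁻¹ := by
  have h0 : (0:ℝ) ≤ (Real.sqrt r)⁻¹ := by positivity
  nlinarith [Real.exp_pos (-z ^ 2 / (4 * r))]

lemma A_upper {t z : ℝ} (ht : 0 < t) (hz : 0 < z) :
    (∫ r in Set.Ioc (0:ℝ) t, (Real.sqrt r)⁻¹ * (1 - Real.exp (-z ^ 2 / (4 * r))))
      ≤ 5 * (z * Real.sqrt t / (Real.sqrt t + z)) := by
  have hst : 0 < Real.sqrt t := Real.sqrt_pos.mpr ht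
  rcases le_total t (z ^ 2) with h | h
  · -- t ≤ z², so √t ≤ z
    have hzt : Real.sqrt t ≤ z := by
      calc Real.sqrt t ≤ Real.sqrt (z ^ 2) := Real.sqrt_le_sqrt h
        _ = z := Real.sqrt_sq hz.le
    have h1 : (∫ r in Set.Ioc (0:ℝ) t, (Real.sqrt r)⁻¹ * (1 - Real.exp (-z ^ 2 / (4 * r))))
        ≤ 2 * Real.sqrt t := by
      rw [← int_inv_sqrt t ht.le]
      exact setIntegral_mono_on (intOn_f2 ht.le) (intOn_inv_sqrt ht.le)
        measurableSet_Ioc fun r hr => f2_le_f0 hr.1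
    refine h1.trans ?_
    rw [show (5:ℝ) * (z * Real.sqrt t / (Real.sqrt t + z))
        = 5 * (z * Real.sqrt t) / (Real.sqrt t + z) by ring,
      le_div_iff₀ (by positivity)]
    nlinarith
  · -- z² ≤ t, so z ≤ √t
    have hz2 : (0:ℝ) < z ^ 2 := by positivity
    have hzt : z ≤ Real.sqrt t := by
      calc z = Real.sqrt (z ^ 2) := (Real.sqrt_sq hz.le).symm
        _ ≤ Real.sqrt t := Real.sqrt_le_sqrt h
    have hsplit : (∫ r in Set.Ioc (0:ℝ) t, (Real.sqrt r)⁻¹ * (1 - Real.exp (-z ^ 2 / (4 * r))))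
        = (∫ r in Set.Ioc (0:ℝ) (z ^ 2), (Real.sqrt r)⁻¹ * (1 - Real.exp (-z ^ 2 / (4 * r))))
          + ∫ r in Set.Ioc (z ^ 2) t, (Real.sqrt r)⁻¹ * (1 - Real.exp (-z ^ 2 / (4 * r))) := by
      rw [← Set.Ioc_union_Ioc_eq_Ioc hz2.le h]
      exact setIntegral_union (Set.Ioc_disjoint_Ioc_of_le le_rfl) measurableSet_Ioc
        (intOn_f2 hz2.le)
        ((intOn_f2 ht.le).mono_set (Set.Ioc_subset_Ioc_left hz2.le))
    have b1 : (∫ r in Set.Ioc (0:ℝ) (z ^ 2), (Real.sqrt r)⁻¹ * (1 - Real.exp (-z ^ 2 / (4 * r))))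
        ≤ 2 * z := by
      have := setIntegral_mono_on (intOn_f2 hz2.le) (intOn_inv_sqrt hz2.le)
        measurableSet_Ioc (fun r hr => f2_le_f0 (z := z) hr.1)
      rwa [int_inv_sqrt _ hz2.le, Real.sqrt_sq hz.le] at this
    have hcont : ContinuousOn (fun r : ℝ => z ^ 2 / 4 * ((Real.sqrt r)⁻¹ * r⁻¹))
        (Set.Icc (z ^ 2) t) := by
      refine continuousOn_const.mul (ContinuousOn.mul ?_ ?_)
      · exact (Real.continuous_sqrt.continuousOn).inv₀
          fun r hr => Real.sqrt_ne_zero'.mpr (lt_of_lt_of_le hz2 hr.1)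
      · exact continuousOn_id.inv₀ fun r hr => ne_of_gt (lt_of_lt_of_le hz2 hr.1)
    have hintg : IntegrableOn (fun r : ℝ => z ^ 2 / 4 * ((Real.sqrt r)⁻¹ * r⁻¹))
        (Set.Ioc (z ^ 2) t) :=
      (hcont.integrableOn_Icc).mono_set Set.Ioc_subset_Icc_self
    have b2 : (∫ r in Set.Ioc (z ^ 2) t, (Real.sqrt r)⁻¹ * (1 - Real.exp (-z ^ 2 / (4 * r))))
        ≤ z / 2 := by
      have step : (∫ r in Set.Ioc (z ^ 2) t, (Real.sqrt r)⁻¹ * (1 - Real.exp (-z ^ 2 / (4 * r))))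
          ≤ ∫ r in Set.Ioc (z ^ 2) t, z ^ 2 / 4 * ((Real.sqrt r)⁻¹ * r⁻¹) := by
        refine setIntegral_mono_on
          ((intOn_f2 ht.le).mono_set (Set.Ioc_subset_Ioc_left hz2.le)) hintg
          measurableSet_Ioc fun r hr => ?_
        have hr0 : 0 < r := lt_of_lt_of_le hz2 hr.1.le
        have hexp : 1 - Real.exp (-z ^ 2 / (4 * r)) ≤ z ^ 2 / (4 * r) := by
          have := Real.add_one_le_exp (-z ^ 2 / (4 * r))
          rw [neg_div] at this ⊢
          linarith
        have h0 : (0:ℝ) ≤ (Real.sqrt r)⁻¹ := by positivity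
        calc (Real.sqrt r)⁻¹ * (1 - Real.exp (-z ^ 2 / (4 * r)))
            ≤ (Real.sqrt r)⁻¹ * (z ^ 2 / (4 * r)) := mul_le_mul_of_nonneg_left hexp h0
          _ = z ^ 2 / 4 * ((Real.sqrt r)⁻¹ * r⁻¹) := by
              rw [div_eq_mul_inv (z ^ 2) (4 * r), mul_inv]; ring
      refine step.trans ?_
      rw [MeasureTheory.integral_const_mul, int_rpow32 hz2 h, Real.sqrt_sq hz.le]
      have h1 : (0:ℝ) ≤ (Real.sqrt t)⁻¹ := by positivity
      have h2 : z * z⁻¹ = 1 := mul_inv_cancel₀ hz.ne'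
      nlinarith
    rw [hsplit]
    have : (2 * z + z / 2 : ℝ) ≤ 5 * (z * Real.sqrt t / (Real.sqrt t + z)) := by
      rw [show (5:ℝ) * (z * Real.sqrt t / (Real.sqrt t + z))
          = 5 * (z * Real.sqrt t) / (Real.sqrt t + z) by ring,
        le_div_iff₀ (by positivity)]
      nlinarith
    linarith

/-- There exist `0 < c₁ ≤ c₂` with
`c₁(x-y)t/(√t+x-y) ≤ σ_t⁴ - μ_{t,x,y}² ≤ c₂(x-y)t/(√t+x-y)` for all `t > 0`, `x > y`,
where `σ_t² = √(t/π)`. -/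
theorem stmt_13 :
    ∃ c₁ c₂ : ℝ, 0 < c₁ ∧ c₁ ≤ c₂ ∧ ∀ t x y : ℝ, 0 < t → y < x →
      c₁ * ((x - y) * t / (Real.sqrt t + (x - y))) ≤
          Real.sqrt (t / π) ^ 2 - muCov t x y ^ 2 ∧
        Real.sqrt (t / π) ^ 2 - muCov t x y ^ 2 ≤
          c₂ * ((x - y) * t / (Real.sqrt t + (x - y))) := by
  have hπ : (0:ℝ) < π := Real.pi_pos
  have hc : (0:ℝ) < 1 - Real.exp (-(1/4)) := by
    have := Real.exp_lt_one_iff.mpr (show -(1/4 : ℝ) < 0 by norm_num)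
    linarith
  refine ⟨(1 - Real.exp (-(1/4))) / π, 5 / π, div_pos hc hπ, ?_, fun t x y ht hxy => ?_⟩
  · gcongr
    nlinarith [Real.exp_pos (-(1/4:ℝ))]
  · have hz : (0:ℝ) < x - y := sub_pos.mpr hxy
    have hst : 0 < Real.sqrt t := Real.sqrt_pos.mpr ht
    set J : ℝ := ∫ r in Set.Ioc (0:ℝ) t,
      (Real.sqrt r)⁻¹ * Real.exp (-(x - y) ^ 2 / (4 * r)) with hJdef
    set A : ℝ := ∫ r in Set.Ioc (0:ℝ) t,
      (Real.sqrt r)⁻¹ * (1 - Real.exp (-(x - y) ^ 2 / (4 * r))) with hAdef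
    have hmu : muCov t x y = (2 * Real.sqrt π)⁻¹ * J := rfl
    have hA_eq : A = 2 * Real.sqrt t - J := by
      rw [hAdef, hJdef, ← int_inv_sqrt t ht.le,
        ← MeasureTheory.integral_sub (intOn_inv_sqrt ht.le) (intOn_f1 ht.le)]
      congr 1
      funext r
      ring
    have hJ0 : 0 ≤ J := by
      rw [hJdef]
      exact setIntegral_nonneg measurableSet_Ioc fun r hr => by positivity
    have hJle : J ≤ 2 * Real.sqrt t := by
      rw [hJdef, ← int_inv_sqrt t ht.le]
      refine setIntegral_mono_on (intOn_f1 ht.le) (intOn_inv_sqrt ht.le)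
        measurableSet_Ioc fun r hr => ?_
      linarith [f2_nonneg (z := x - y) hr.1]
    have hAl := A_lower (z := x - y) ht hz
    have hAu := A_upper (z := x - y) ht hz
    rw [← hAdef] at hAl hAu
    have hA0 : 0 ≤ A := le_trans (by positivity) hAl
    have hQT : x - y > 0 → (x - y) * Real.sqrt t / (Real.sqrt t + (x - y)) * Real.sqrt t
        = (x - y) * t / (Real.sqrt t + (x - y)) := by
      intro _
      rw [div_mul_eq_mul_div, mul_assoc, Real.mul_self_sqrt ht.le]
    have hQT' := hQT hz
    have hsπ : Real.sqrt π * Real.sqrt π = π := Real.mul_self_sqrt hπ.le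
    have hkey : Real.sqrt (t / π) ^ 2 - muCov t x y ^ 2
        = (4 * π)⁻¹ * (A * (2 * Real.sqrt t + J)) := by
      rw [Real.sq_sqrt (by positivity : (0:ℝ) ≤ t / π), hmu, hA_eq]
      have hts : Real.sqrt t * Real.sqrt t = t := Real.mul_self_sqrt ht.le
      have hsπ0 : Real.sqrt π ≠ 0 := by positivity
      field_simp
      linear_combination (-16*(Real.sqrt π)^2)*hts + (4*J^2)*hsπ
    constructor
    · rw [hkey]
      calc (1 - Real.exp (-(1/4))) / π * ((x - y) * t / (Real.sqrt t + (x - y)))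
          = (4 * π)⁻¹ * (((1 - Real.exp (-(1/4)))
              * (2 * ((x - y) * Real.sqrt t / (Real.sqrt t + (x - y))))) * (2 * Real.sqrt t)) := by
            rw [← hQT']
            field_simp
            ring
        _ ≤ (4 * π)⁻¹ * (A * (2 * Real.sqrt t + J)) := by
            refine mul_le_mul_of_nonneg_left ?_ (by positivity)
            refine mul_le_mul hAl (by linarith) (by positivity) hA0
    · rw [hkey]
      calc (4 * π)⁻¹ * (A * (2 * Real.sqrt t + J))
          ≤ (4 * π)⁻¹ * ((5 * ((x - y) * Real.sqrt t / (Real.sqrt t + (x - y)))) * (4 * Real.sqrt t)) := by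
            refine mul_le_mul_of_nonneg_left ?_ (by positivity)
            refine mul_le_mul hAu (by linarith) (by positivity) (by positivity)
        _ = 5 / π * ((x - y) * t / (Real.sqrt t + (x - y))) := by
            rw [← hQT']
            field_simp
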